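/- Let M be a squarefree P-module over a field K for a finite poset P. Then as graded K-vector spaces, M decomposes as the direct sum over σ ∈ P of M_{e_σ} ⊗_K K[⟨σ⟩], where K[⟨σ⟩] is the Stanley–Reisner ring of the order complex of the principal order ideal ⟨σ⟩. -/

import Mathlib

open Classical DirectSum

/-- `P̂ = P \ {⊥}`. -/
abbrev Phat (P : Type) [PartialOrder P] [OrderBot P] := {σ : P // σ ≠ ⊥}

variable {K : Type} [Field K] {P : Type} [Fintype P] [PartialOrder P] [OrderBot P]
  [DecidableEq P]

/-- `supp u` is a face of the order complex `Δ_P`, i.e. a chain of `P̂`. -/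
def ChainSupp (u : Phat P →₀ ℕ) : Prop :=
  ∀ σ ∈ u.support, ∀ τ ∈ u.support, (σ : P) ≤ (τ : P) ∨ (τ : P) ≤ (σ : P)

/-- `τ ≤ max (supp u)` (in particular `supp u` has a maximum). -/
def LeMaxSupp (u : Phat P →₀ ℕ) (τ : Phat P) : Prop :=
  ∃ ρ ∈ u.support, (τ : P) ≤ (ρ : P) ∧ ∀ σ ∈ u.support, (σ : P) ≤ (ρ : P)

/-- A squarefree `P`-module: a finitely generated `ℕ^{|P̂|}`-graded module `M` over
`R = K[x_σ : σ ∈ P̂]` (the grading `π` being given by `K`-subspaces with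
`x_τ · M_u ⊆ M_{u + e_τ}`) such that
(a) `M_u = 0` whenever `supp u ∉ Δ_P`, and
(b) `×x_τ : M_u → M_{u+e_τ}` is bijective whenever `supp (u + e_τ) ∈ Δ_P` and
`τ ≤ max (supp u)`. -/
def IsSquarefreePMod (M : Type) [AddCommGroup M]
    [Module (MvPolynomial (Phat P) K) M] [Module K M]
    [IsScalarTower K (MvPolynomial (Phat P) K) M]
    (π : (Phat P →₀ ℕ) → Submodule K M) : Prop :=
  DirectSum.IsInternal π ∧
  Module.Finite (MvPolynomial (Phat P) K) M ∧
  (∀ u, FiniteDimensional K (π u)) ∧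
  (∀ (u) (τ : Phat P), ∀ x ∈ π u,
    (MvPolynomial.X τ : MvPolynomial (Phat P) K) • x ∈ π (u + Finsupp.single τ 1)) ∧
  (∀ u, ¬ ChainSupp u → π u = ⊥) ∧
  (∀ (u) (τ : Phat P), ChainSupp (u + Finsupp.single τ 1) → LeMaxSupp u τ →
    Set.BijOn (fun x => (MvPolynomial.X τ : MvPolynomial (Phat P) K) • x)
      (↑(π u) : Set M) (↑(π (u + Finsupp.single τ 1)) : Set M))

/-- The exponent vector `e_σ` (with `e_⊥ = 0`). -/
noncomputable def eVec (σ : P) : Phat P →₀ ℕ :=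
  if h : σ = ⊥ then 0 else Finsupp.single ⟨σ, h⟩ 1

/-- The degree-`u` component of the summand `M_{e_σ} ⊗_K K[⟨σ⟩]` (the elements of
`M_{e_σ}` having degree `e_σ`) is nonzero exactly when this condition holds:
either `σ = ⊥` and `u = 0`, or `u = e_σ + v` where `x^v ∈ K[⟨σ⟩]`, i.e. `supp u`
is a chain contained in `⟨σ⟩ = {τ : τ ≤ σ}` and containing `σ`. -/
def SummandCond (σ : P) (u : Phat P →₀ ℕ) : Prop :=
  (σ = ⊥ ∧ u = 0) ∨
    (∃ h : σ ≠ ⊥, ChainSupp u ∧ (∀ τ ∈ u.support, (τ : P) ≤ σ) ∧ 1 ≤ u ⟨σ, h⟩)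

section Helpers

set_option linter.unusedSectionVars false

/-- Direct sum over a unique index type. -/
noncomputable def dsUnique {ι : Type} [Unique ι] [DecidableEq ι] (β : ι → Type)
    [∀ i, AddCommGroup (β i)] [∀ i, Module K (β i)] :
    (⨁ i, β i) ≃ₗ[K] β default where
  toFun x := x default
  map_add' x y := by simp
  map_smul' c x := DFinsupp.smul_apply c x default
  invFun := DirectSum.lof K ι β default
  left_inv x := by
    refine DFinsupp.ext fun i => ?_
    rw [Unique.eq_default i]
    simp [DirectSum.lof_apply]
  right_inv b := by simp [DirectSum.lof_apply]

theorem chainSupp_mono {u v : Phat P →₀ ℕ} (h : u.support ⊆ v.support)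
    (hv : ChainSupp v) : ChainSupp u :=
  fun σ hσ τ hτ => hv σ (h hσ) τ (h hτ)

theorem step_equiv {M : Type} [AddCommGroup M]
    [Module (MvPolynomial (Phat P) K) M] [Module K M]
    [IsScalarTower K (MvPolynomial (Phat P) K) M]
    {π : (Phat P →₀ ℕ) → Submodule K M}
    (hmul : ∀ (u) (τ : Phat P), ∀ x ∈ π u,
      (MvPolynomial.X τ : MvPolynomial (Phat P) K) • x ∈ π (u + Finsupp.single τ 1))
    (hbij : ∀ (u) (τ : Phat P), ChainSupp (u + Finsupp.single τ 1) → LeMaxSupp u τ →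
      Set.BijOn (fun x => (MvPolynomial.X τ : MvPolynomial (Phat P) K) • x)
        (↑(π u) : Set M) (↑(π (u + Finsupp.single τ 1)) : Set M))
    (v : Phat P →₀ ℕ) (τ : Phat P) (h1 : ChainSupp (v + Finsupp.single τ 1))
    (h2 : LeMaxSupp v τ) :
    Nonempty ((π v) ≃ₗ[K] π (v + Finsupp.single τ 1)) := by
  have hb := hbij v τ h1 h2
  have hcomm : ∀ (c : K) (x : M),
      (MvPolynomial.X τ : MvPolynomial (Phat P) K) • (c • x)
        = c • ((MvPolynomial.X τ : MvPolynomial (Phat P) K) • x) := by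
    intro c x
    rw [← smul_one_smul (MvPolynomial (Phat P) K) c x, ← mul_smul, mul_comm, mul_smul,
      smul_one_smul]
  refine ⟨LinearEquiv.ofBijective
    { toFun := fun x => ⟨(MvPolynomial.X τ : MvPolynomial (Phat P) K) • x.1,
        hmul v τ x.1 x.2⟩
      map_add' := fun x y => Subtype.ext (by simp [smul_add])
      map_smul' := fun c x => Subtype.ext (by simpa using hcomm c x.1) } ?_⟩
  constructor
  · intro x y hxy
    exact Subtype.ext (hb.injOn x.2 y.2 (congrArg Subtype.val hxy))
  · intro y
    obtain ⟨x, hx, hxy⟩ := hb.surjOn y.2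
    exact ⟨⟨x, hx⟩, Subtype.ext hxy⟩

theorem chain_equiv {M : Type} [AddCommGroup M]
    [Module (MvPolynomial (Phat P) K) M] [Module K M]
    [IsScalarTower K (MvPolynomial (Phat P) K) M]
    {π : (Phat P →₀ ℕ) → Submodule K M}
    (hmul : ∀ (u) (τ : Phat P), ∀ x ∈ π u,
      (MvPolynomial.X τ : MvPolynomial (Phat P) K) • x ∈ π (u + Finsupp.single τ 1))
    (hbij : ∀ (u) (τ : Phat P), ChainSupp (u + Finsupp.single τ 1) → LeMaxSupp u τ →
      Set.BijOn (fun x => (MvPolynomial.X τ : MvPolynomial (Phat P) K) • x)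
        (↑(π u) : Set M) (↑(π (u + Finsupp.single τ 1)) : Set M))
    (ρ : Phat P) :
    ∀ (n : ℕ) (w : Phat P →₀ ℕ), (w.sum fun _ k => k) = n →
      ChainSupp (Finsupp.single ρ 1 + w) → (∀ τ ∈ w.support, (τ : P) ≤ (ρ : P)) →
      Nonempty ((π (Finsupp.single ρ 1)) ≃ₗ[K] π (Finsupp.single ρ 1 + w)) := by
  intro n
  induction n with
  | zero =>
    intro w hw _ _
    have hw0 : w = 0 := by
      by_contra h
      obtain ⟨τ, hτ⟩ := Finsupp.support_nonempty_iff.mpr h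
      have h1 : 1 ≤ w τ := Nat.one_le_iff_ne_zero.mpr (Finsupp.mem_support_iff.mp hτ)
      have h2 : w τ ≤ ∑ x ∈ w.support, w x :=
        Finset.single_le_sum (f := fun τ => w τ) (fun _ _ => Nat.zero_le _) hτ
      simp only [Finsupp.sum] at hw
      omega
    subst hw0
    exact ⟨LinearEquiv.ofEq _ _ (by rw [add_zero])⟩
  | succ n ih =>
    intro w hw hchain hle
    have hw0 : w ≠ 0 := by rintro rfl; simp at hw
    obtain ⟨τ, hτ⟩ := Finsupp.support_nonempty_iff.mpr hw0
    have hwτ : 1 ≤ w τ := Nat.one_le_iff_ne_zero.mpr (Finsupp.mem_support_iff.mp hτ)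
    set w' := w - Finsupp.single τ 1 with hw'def
    have happ : ∀ σ, w' σ = w σ - Finsupp.single τ 1 σ := fun σ =>
      Finsupp.tsub_apply w (Finsupp.single τ 1) σ
    have hsplit : w = w' + Finsupp.single τ 1 := by
      ext σ
      rw [Finsupp.add_apply, happ σ, Finsupp.single_apply]
      by_cases h : τ = σ
      · subst h; simp; omega
      · simp [h]
    have hsub : w'.support ⊆ w.support := by
      intro σ hσ
      rw [Finsupp.mem_support_iff] at *
      rw [happ] at hσ
      omega
    have hsum : (w'.sum fun _ k => k) = n := by
      have h2 : ((w' + Finsupp.single τ 1).sum fun (_ : Phat P) (k : ℕ) => k)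
          = (w'.sum fun _ k => k) + ((Finsupp.single τ 1).sum fun (_ : Phat P) (k : ℕ) => k) := by
        exact Finsupp.sum_add_index' (fun _ => rfl) (fun _ _ _ => rfl)
      rw [← hsplit] at h2
      rw [Finsupp.sum_single_index rfl] at h2
      omega
    have hsub2 : (Finsupp.single ρ 1 + w').support ⊆ (Finsupp.single ρ 1 + w).support := by
      intro σ hσ
      rw [Finsupp.mem_support_iff] at *
      rw [Finsupp.add_apply] at *
      rw [happ] at hσ
      omega
    have hchain' : ChainSupp (Finsupp.single ρ 1 + w') := chainSupp_mono hsub2 hchain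
    obtain ⟨e1⟩ := ih w' hsum hchain' (fun σ hσ => hle σ (hsub hσ))
    have heq : Finsupp.single ρ 1 + w' + Finsupp.single τ 1 = Finsupp.single ρ 1 + w := by
      rw [hsplit, add_assoc]
    have hρmem : ρ ∈ (Finsupp.single ρ 1 + w').support := by
      rw [Finsupp.mem_support_iff, Finsupp.add_apply, Finsupp.single_apply]
      simp
    have hmax : ∀ σ : Phat P, σ ∈ (Finsupp.single ρ 1 + w').support → (σ : P) ≤ (ρ : P) := by
      intro σ hσ
      rw [Finsupp.mem_support_iff, Finsupp.add_apply, Finsupp.single_apply] at hσ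
      by_cases h : ρ = σ
      · rw [← h]
      · have hne : w' σ ≠ 0 := by simpa [h] using hσ
        exact hle σ (hsub (Finsupp.mem_support_iff.mpr hne))
    obtain ⟨e2⟩ := step_equiv hmul hbij (Finsupp.single ρ 1 + w') τ
      (heq ▸ hchain) ⟨ρ, hρmem, hle τ hτ, hmax⟩
    exact ⟨e1.trans (e2.trans (LinearEquiv.ofEq _ _ (by rw [heq])))⟩

end Helpers

/-- Lemma 2.3.  If `M` is a squarefree `P`-module over a field
`K`, then as graded `K`-vector spaces `M` decomposes as
`⊕_{σ ∈ P} (M_{e_σ} ⊗_K K[⟨σ⟩])`: in each degree `u`, the component `M_u` is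
`K`-linearly isomorphic to the direct sum over `σ ∈ P` of the degree-`u`
components of `M_{e_σ} ⊗_K K[⟨σ⟩]` (each such component being a copy of
`M_{e_σ} ⊗_K K ≅ M_{e_σ}`). -/
theorem squarefree_decomposition
    (M : Type) [AddCommGroup M]
    [Module (MvPolynomial (Phat P) K) M] [Module K M]
    [IsScalarTower K (MvPolynomial (Phat P) K) M]
    (π : (Phat P →₀ ℕ) → Submodule K M)
    (hM : IsSquarefreePMod (K := K) M π) :
    ∀ u : Phat P →₀ ℕ,
      Nonempty ((π u) ≃ₗ[K] ⨁ σ : {σ : P // SummandCond σ u}, π (eVec σ.1)) := by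
  obtain ⟨-, -, -, hmul, hzero, hbij⟩ := hM
  intro u
  by_cases hc : ChainSupp u
  · by_cases h0 : u = 0
    · subst h0
      letI : Unique {σ : P // SummandCond σ (0 : Phat P →₀ ℕ)} := by
        refine ⟨⟨⟨⊥, Or.inl ⟨rfl, rfl⟩⟩⟩, ?_⟩
        rintro ⟨σ, ⟨h1, -⟩ | ⟨h, -, -, h1⟩⟩
        · exact Subtype.ext h1
        · simp at h1
      refine ⟨(LinearEquiv.ofEq _ _ ?_).trans
        (dsUnique (K := K)
          (fun σ : {σ : P // SummandCond σ (0 : Phat P →₀ ℕ)} => π (eVec σ.1))).symm⟩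
      show π 0 = π (eVec (⊥ : P))
      rw [show eVec (⊥ : P) = 0 from dif_pos rfl]
    · have hne : u.support.Nonempty := Finsupp.support_nonempty_iff.mpr h0
      obtain ⟨ρ, hρs, hρm⟩ : ∃ ρ ∈ u.support, ∀ σ ∈ u.support, ¬ ρ < σ := by
        obtain ⟨ρ, hρ⟩ := Finset.exists_maximal hne
        exact ⟨ρ, hρ.1, fun σ hσ hlt => hlt.not_ge (hρ.2 hσ hlt.le)⟩
      have hmax : ∀ σ : Phat P, σ ∈ u.support → (σ : P) ≤ (ρ : P) := by
        intro σ hσ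
        rcases hc ρ hρs σ hσ with h | h
        · rcases h.lt_or_eq with h' | h'
          · exact absurd (Subtype.coe_lt_coe.mp h') (hρm σ hσ)
          · exact h'.ge
        · exact h
      have hρ1 : 1 ≤ u ρ := Nat.one_le_iff_ne_zero.mpr (Finsupp.mem_support_iff.mp hρs)
      set w := u - Finsupp.single ρ 1 with hwdef
      have hsplit : u = Finsupp.single ρ 1 + w := by
        ext σ
        rw [Finsupp.add_apply, Finsupp.tsub_apply, Finsupp.single_apply]
        by_cases h : ρ = σ
        · subst h; simp; omega
        · simp [h]
      have hwsub : w.support ⊆ u.support := by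
        intro σ hσ
        rw [Finsupp.mem_support_iff] at *
        rw [Finsupp.tsub_apply] at hσ
        omega
      obtain ⟨e⟩ := chain_equiv hmul hbij ρ (w.sum fun _ k => k) w rfl
        (hsplit ▸ hc) (fun τ hτ => hmax τ (hwsub hτ))
      letI : Unique {σ : P // SummandCond σ u} := by
        refine ⟨⟨⟨(ρ : P), Or.inr ⟨ρ.2, hc, fun τ hτ => hmax τ hτ, hρ1⟩⟩⟩, ?_⟩
        rintro ⟨σ, ⟨-, h1⟩ | ⟨h, -, hub, h1⟩⟩
        · exact absurd h1 h0
        · refine Subtype.ext (le_antisymm ?_ (hub ρ hρs))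
          exact hmax ⟨σ, h⟩ (Finsupp.mem_support_iff.mpr (by omega))
      refine ⟨(LinearEquiv.ofEq _ _ (congrArg π hsplit)).trans ((e.symm.trans
        (LinearEquiv.ofEq _ _ ?_)).trans
        (dsUnique (K := K) (fun σ : {σ : P // SummandCond σ u} => π (eVec σ.1))).symm)⟩
      show π (Finsupp.single ρ 1) = π (eVec (ρ : P))
      rw [show eVec (ρ : P) = Finsupp.single ρ 1 from dif_neg ρ.2]
  · have hbot := hzero u hc
    haveI : Subsingleton (π u) := by
      constructor
      rintro ⟨a, ha⟩ ⟨b, hb⟩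
      rw [hbot, Submodule.mem_bot] at ha hb
      exact Subtype.ext (ha.trans hb.symm)
    haveI he : IsEmpty {σ : P // SummandCond σ u} := by
      constructor
      rintro ⟨σ, ⟨-, rfl⟩ | ⟨-, hch, -⟩⟩
      · exact hc (fun a ha => by simp at ha)
      · exact hc hch
    haveI : Subsingleton (⨁ σ : {σ : P // SummandCond σ u}, π (eVec σ.1)) :=
      ⟨fun x y => DFinsupp.ext fun i => isEmptyElim i⟩
    exact ⟨LinearEquiv.ofLinear 0 0 (LinearMap.ext fun x => Subsingleton.elim _ _)
      (LinearMap.ext fun x => Subsingleton.elim _ _)⟩
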